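/- Let P be a finite poset with n elements and let (x_1, x_2, …, x_n) be any linear extension of P. Then chain polytope rowmotion satisfies Row_C = τ_{x_n} ∘ ⋯ ∘ τ_{x_2} ∘ τ_{x_1} (compositions applied right to left, so τ_{x_1} is applied first), where Row_C = OP^{-1} ∘ comp ∘ OR : C(P) → C(P). -/

import Mathlib

open scoped Classical

variable {P : Type*} [PartialOrder P]

/-- Membership in the chain polytope `C(P)`: nonnegative labels whose sum along every
chain is at most 1. -/
def InChainPolytope (P : Type*) [PartialOrder P] (g : P → ℝ) : Prop :=
  (∀ x : P, 0 ≤ g x) ∧ ∀ l : List P, l.Chain' (· < ·) → (l.map g).sum ≤ 1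

/-- Membership in the order-reversing polytope `OR(P)`. -/
def InORPolytope (P : Type*) [PartialOrder P] (f : P → ℝ) : Prop :=
  (∀ x : P, 0 ≤ f x ∧ f x ≤ 1) ∧ ∀ ⦃x y : P⦄, x ≤ y → f y ≤ f x

/-- Membership in the order-preserving polytope `OP(P)`. -/
def InOPPolytope (P : Type*) [PartialOrder P] (f : P → ℝ) : Prop :=
  (∀ x : P, 0 ≤ f x ∧ f x ≤ 1) ∧ ∀ ⦃x y : P⦄, x ≤ y → f x ≤ f y

/-- The poset `P̂`, obtained from `P` by adjoining a minimum `m̂ = ⊥` and a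
maximum `M̂ = ⊤`. -/
abbrev PHat (P : Type*) := WithBot (WithTop P)

/-- The inclusion of `P` into `P̂`. -/
def toHat (x : P) : PHat P := ((x : WithTop P) : PHat P)

/-- Extension of an order-reversing labeling to `P̂`, with `f(m̂) = 1`, `f(M̂) = 0`. -/
noncomputable def hatOR (f : P → ℝ) : PHat P → ℝ := fun y =>
  WithBot.recBotCoe 1 (fun w => WithTop.recTopCoe 0 f w) y

/-- Extension of an order-preserving labeling to `P̂`, with `f(m̂) = 0`, `f(M̂) = 1`. -/
noncomputable def hatOP (f : P → ℝ) : PHat P → ℝ := fun y =>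
  WithBot.recBotCoe 0 (fun w => WithTop.recTopCoe 1 f w) y

/-- The saturated chains `x = y_1 ⋖ y_2 ⋖ ⋯ ⋖ y_k` from `x` up to a maximal element. -/
def maxChainsFrom (x : P) : Set (List P) :=
  {l | l.Chain' (· ⋖ ·) ∧ l.head? = some x ∧ ∃ z, l.getLast? = some z ∧ IsMax z}

/-- The saturated chains `y_1 ⋖ ⋯ ⋖ y_k = x` from a minimal element up to `x`. -/
def maxChainsTo (x : P) : Set (List P) :=
  {l | l.Chain' (· ⋖ ·) ∧ (∃ a, l.head? = some a ∧ IsMin a) ∧ l.getLast? = some x}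

/-- The maximal chains of `P` containing `e`. -/
def maxChainsThru (e : P) : Set (List P) :=
  {l | l.Chain' (· ⋖ ·) ∧ (∃ a, l.head? = some a ∧ IsMin a) ∧
    (∃ z, l.getLast? = some z ∧ IsMax z) ∧ e ∈ l}

/-- The transfer map `OR : C(P) → OR(P)`:
`(OR g)(x) = max{ g(y_1) + ⋯ + g(y_k) | x = y_1 ⋖ ⋯ ⋖ y_k, y_k maximal }`. -/
noncomputable def ORmap (g : P → ℝ) (x : P) : ℝ :=
  sSup ((fun l => (l.map g).sum) '' maxChainsFrom x)

/-- The transfer map `OP : C(P) → OP(P)`: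
`(OP g)(x) = max{ g(y_1) + ⋯ + g(y_k) | y_1 ⋖ ⋯ ⋖ y_k = x, y_1 minimal }`. -/
noncomputable def OPmap (g : P → ℝ) (x : P) : ℝ :=
  sSup ((fun l => (l.map g).sum) '' maxChainsTo x)

/-- The inverse transfer map: `(OR⁻¹ f)(x) = f(x) - max{ f(y) | y ⋗ x in P̂ }`. -/
noncomputable def ORinv (f : P → ℝ) (x : P) : ℝ :=
  f x - sSup {v : ℝ | ∃ y : PHat P, toHat x ⋖ y ∧ v = hatOR f y}

/-- The inverse transfer map: `(OP⁻¹ f)(x) = f(x) - max{ f(y) | y ⋖ x in P̂ }`. -/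
noncomputable def OPinv (f : P → ℝ) (x : P) : ℝ :=
  f x - sSup {v : ℝ | ∃ y : PHat P, y ⋖ toHat x ∧ v = hatOP f y}

/-- The piecewise-linear order ideal toggle on the order-reversing polytope:
the label of `e` is replaced by
`max{f(y) | y ⋗ e in P̂} + min{f(y) | y ⋖ e in P̂} - f(e)`. -/
noncomputable def tPL (e : P) (f : P → ℝ) : P → ℝ :=
  Function.update f e
    (sSup {v : ℝ | ∃ y : PHat P, toHat e ⋖ y ∧ v = hatOR f y}
      + sInf {v : ℝ | ∃ y : PHat P, y ⋖ toHat e ∧ v = hatOR f y} - f e)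

/-- The piecewise-linear antichain (chain polytope) toggle: the label of `e` is replaced
by `1 - max{ Σ g(y_i) | (y_1,…,y_k) a maximal chain of P containing e }`. -/
noncomputable def tauPL (e : P) (g : P → ℝ) : P → ℝ :=
  Function.update g e (1 - sSup ((fun l => (l.map g).sum) '' maxChainsThru e))

/-- The indicator function of a subset. -/
noncomputable def ind (S : Set P) : P → ℝ := fun x => if x ∈ S then 1 else 0

def listComp {α : Type*} (fs : List (α → α)) : α → α := fs.foldr (· ∘ ·) id

/-- A list `l` is a linear extension of the subposet `S`. -/
def IsLinExtListOn {P : Type*} [PartialOrder P] (S : Set P) (l : List P) : Prop :=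
  l.Nodup ∧ (∀ x : P, x ∈ l ↔ x ∈ S) ∧
    ∀ i j : Fin l.length, l.get i < l.get j → (i : ℕ) < (j : ℕ)

section Aux
variable {P : Type*} [PartialOrder P] [Fintype P]

set_option linter.unusedSectionVars false

instance : Finite (PHat P) := inferInstanceAs (Finite (Option (Option P)))

lemma hatOP_bot (f : P → ℝ) : hatOP f ⊥ = 0 := rfl
lemma hatOP_toHat (f : P → ℝ) (a : P) : hatOP f (toHat a) = f a := rfl

lemma toHat_covBy_toHat {a b : P} (h : a ⋖ b) : toHat a ⋖ toHat b := by
  rw [toHat, toHat, WithBot.coe_covBy_coe, WithTop.coe_covBy_coe]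
  exact h

lemma isMin_coe_iff {e : P} : IsMin ((e : WithTop P)) ↔ IsMin e := by
  constructor
  · intro h a ha
    exact_mod_cast h (show ((a : WithTop P)) ≤ (e : WithTop P) from by exact_mod_cast ha)
  · intro h b hb
    induction b using WithTop.recTopCoe with
    | top => exact absurd hb (by simp)
    | coe a => exact_mod_cast h (show a ≤ e from by exact_mod_cast hb)

lemma covBy_toHat_iff {y : PHat P} {e : P} :
    y ⋖ toHat e ↔ (y = ⊥ ∧ IsMin e) ∨ ∃ a : P, y = toHat a ∧ a ⋖ e := by
  constructor
  · intro h
    induction y using WithBot.recBotCoe with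
    | bot =>
      left
      refine ⟨rfl, ?_⟩
      rw [toHat, WithBot.bot_covBy_coe] at h
      exact isMin_coe_iff.mp h
    | coe w =>
      rw [toHat, WithBot.coe_covBy_coe] at h
      induction w using WithTop.recTopCoe with
      | top => exact absurd h.1 (by simp)
      | coe a =>
        right
        exact ⟨a, rfl, by rwa [WithTop.coe_covBy_coe] at h⟩
  · rintro (⟨rfl, hmin⟩ | ⟨a, rfl, hab⟩)
    · rw [toHat, WithBot.bot_covBy_coe]
      exact isMin_coe_iff.mpr hmin
    · exact toHat_covBy_toHat hab

lemma exists_covBy_below (e : P) : ∃ y : PHat P, y ⋖ toHat e := by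
  by_cases hmin : IsMin e
  · exact ⟨⊥, covBy_toHat_iff.mpr (Or.inl ⟨rfl, hmin⟩)⟩
  · obtain ⟨a, ha⟩ := exists_covBy_of_wellFoundedGT hmin
    exact ⟨toHat a, toHat_covBy_toHat ha⟩

lemma finite_val_set (e : P) (F : PHat P → ℝ) :
    {v : ℝ | ∃ y : PHat P, y ⋖ toHat e ∧ v = F y}.Finite := by
  apply (Set.finite_range F).subset
  rintro v ⟨y, -, rfl⟩
  exact ⟨y, rfl⟩

lemma nonempty_val_set (e : P) (F : PHat P → ℝ) :
    {v : ℝ | ∃ y : PHat P, y ⋖ toHat e ∧ v = F y}.Nonempty := by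
  obtain ⟨y, hy⟩ := exists_covBy_below e
  exact ⟨F y, y, hy, rfl⟩

end Aux
section Chains
variable {P : Type*} [PartialOrder P] [Fintype P]
set_option linter.unusedSectionVars false

lemma chain'_covBy_pairwise {l : List P} (h : l.Chain' (· ⋖ ·)) : l.Pairwise (· < ·) :=
  List.isChain_iff_pairwise.mp (h.imp fun _ _ hab => hab.lt)

lemma chain'_covBy_nodup {l : List P} (h : l.Chain' (· ⋖ ·)) : l.Nodup :=
  (chain'_covBy_pairwise h).imp ne_of_lt

lemma chains_finite : {l : List P | l.Chain' (· ⋖ ·)}.Finite := by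
  apply (List.finite_length_le P (Fintype.card P)).subset
  intro l hl
  exact (chain'_covBy_nodup hl).length_le_card

lemma maxChainsFrom_finite (x : P) : (maxChainsFrom x).Finite :=
  chains_finite.subset fun l hl => hl.1

lemma maxChainsTo_finite (x : P) : (maxChainsTo x).Finite :=
  chains_finite.subset fun l hl => hl.1

lemma maxChainsThru_finite (e : P) : (maxChainsThru e).Finite :=
  chains_finite.subset fun l hl => hl.1

lemma maxChainsTo_ne_nil {x : P} {l : List P} (hl : l ∈ maxChainsTo x) : l ≠ [] := by
  intro h
  rw [h] at hl
  exact absurd hl.2.2 (by simp)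

lemma maxChainsTo_snoc {a x : P} {s : List P} (hs : s ∈ maxChainsTo a) (hax : a ⋖ x) :
    s ++ [x] ∈ maxChainsTo x := by
  obtain ⟨hc, ⟨m, hm, hmin⟩, hlast⟩ := hs
  refine ⟨?_, ⟨m, ?_, hmin⟩, ?_⟩
  · refine List.isChain_append.mpr ⟨hc, List.isChain_singleton x, ?_⟩
    intro p hp q hq
    rw [hlast] at hp
    cases hp
    cases hq
    exact hax
  · rwa [List.head?_append_of_ne_nil _ (maxChainsTo_ne_nil ⟨hc, ⟨m, hm, hmin⟩, hlast⟩)]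
  · rw [List.getLast?_append_of_ne_nil _ (by simp : ([x] : List P) ≠ [])]
    rfl

lemma maxChainsTo_cases {x : P} {l : List P} (hl : l ∈ maxChainsTo x) :
    (l = [x] ∧ IsMin x) ∨ ∃ a s, a ⋖ x ∧ s ∈ maxChainsTo a ∧ l = s ++ [x] := by
  obtain ⟨hc, ⟨m, hm, hmin⟩, hlast⟩ := hl
  have hne : l ≠ [] := by intro h; rw [h] at hlast; exact absurd hlast (by simp)
  have hdecomp : l.dropLast ++ [x] = l := List.dropLast_append_getLast? x hlast
  by_cases hs : l.dropLast = []
  · left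
    rw [hs] at hdecomp
    have hx : l = [x] := hdecomp.symm
    refine ⟨hx, ?_⟩
    rw [hx] at hm
    cases hm
    exact hmin
  · right
    rw [← hdecomp] at hc hm
    obtain ⟨hc1, hc2, hrel⟩ := List.isChain_append.mp hc
    have hlast' : l.dropLast.getLast? = some (l.dropLast.getLast hs) :=
      List.getLast?_eq_getLast hs
    refine ⟨l.dropLast.getLast hs, l.dropLast, ?_, ⟨hc1, ⟨m, ?_, hmin⟩, hlast'⟩, hdecomp.symm⟩
    · exact hrel _ hlast' _ rfl
    · rwa [List.head?_append_of_ne_nil _ hs] at hm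

lemma maxChainsTo_nonempty (x : P) : (maxChainsTo x).Nonempty := by
  induction x using WellFoundedLT.induction with
  | ind x IH =>
    by_cases hmin : IsMin x
    · exact ⟨[x], List.isChain_singleton x, ⟨x, rfl, hmin⟩, rfl⟩
    · obtain ⟨a, ha⟩ := exists_covBy_of_wellFoundedGT hmin
      obtain ⟨s, hs⟩ := IH a ha.lt
      exact ⟨s ++ [x], maxChainsTo_snoc hs ha⟩

lemma maxChainsFrom_ne_nil {x : P} {l : List P} (hl : l ∈ maxChainsFrom x) : l ≠ [] := by
  intro h
  rw [h] at hl
  exact absurd hl.2.1 (by simp)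

lemma maxChainsFrom_nonempty (x : P) : (maxChainsFrom x).Nonempty := by
  induction x using WellFoundedGT.induction with
  | ind x IH =>
    by_cases hmax : IsMax x
    · exact ⟨[x], List.isChain_singleton x, rfl, x, rfl, hmax⟩
    · obtain ⟨b, hb⟩ := exists_covBy_of_wellFoundedLT hmax
      obtain ⟨u, hu⟩ := IH b hb.lt
      refine ⟨x :: u, ?_, rfl, ?_⟩
      · refine List.isChain_cons.mpr ⟨?_, hu.1⟩
        intro q hq
        rw [hu.2.1] at hq
        cases hq
        exact hb
      · obtain ⟨z, hz, hzmax⟩ := hu.2.2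
        exact ⟨z, by rw [List.getLast?_cons, hz]  <;> simp [maxChainsFrom_ne_nil hu], hzmax⟩

end Chains
section LemmaA
variable {P : Type*} [PartialOrder P] [Fintype P]
set_option linter.unusedSectionVars false

/-- The "max below" quantity appearing in `OPinv`. -/
noncomputable def Slo (f : P → ℝ) (x : P) : ℝ :=
  sSup {v : ℝ | ∃ y : PHat P, y ⋖ toHat x ∧ v = hatOP f y}

lemma OPinv_eq (f : P → ℝ) (x : P) : OPinv f x = f x - Slo f x := rfl

lemma Slo_of_isMin (f : P → ℝ) {x : P} (hmin : IsMin x) : Slo f x = 0 := by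
  have : {v : ℝ | ∃ y : PHat P, y ⋖ toHat x ∧ v = hatOP f y} = {0} := by
    ext v
    constructor
    · rintro ⟨y, hy, rfl⟩
      rcases covBy_toHat_iff.mp hy with ⟨rfl, -⟩ | ⟨a, rfl, hax⟩
      · rfl
      · exact absurd hax.lt (hmin.not_lt)
    · rintro rfl
      exact ⟨⊥, covBy_toHat_iff.mpr (Or.inl ⟨rfl, hmin⟩), rfl⟩
  rw [Slo, this, csSup_singleton]

lemma le_Slo (f : P → ℝ) {x a : P} (hax : a ⋖ x) : f a ≤ Slo f x :=
  le_csSup (finite_val_set x (hatOP f)).bddAbove ⟨toHat a, toHat_covBy_toHat hax, rfl⟩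

lemma sum_OPinv_le (f : P → ℝ) (x : P) : ∀ l ∈ maxChainsTo x, (l.map (OPinv f)).sum ≤ f x := by
  induction x using WellFoundedLT.induction with
  | ind x IH =>
    intro l hl
    rcases maxChainsTo_cases hl with ⟨rfl, hmin⟩ | ⟨a, s, hax, hs, rfl⟩
    · simp [OPinv_eq, Slo_of_isMin f hmin]
    · have h1 : (s.map (OPinv f)).sum ≤ f a := IH a hax.lt s hs
      have h2 : f a ≤ Slo f x := le_Slo f hax
      calc ((s ++ [x]).map (OPinv f)).sum = (s.map (OPinv f)).sum + (f x - Slo f x) := by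
            simp [OPinv_eq]
        _ ≤ f a + (f x - Slo f x) := by linarith
        _ ≤ f x := by linarith

lemma exists_sum_OPinv_eq (f : P → ℝ) (x : P) :
    ∃ l ∈ maxChainsTo x, (l.map (OPinv f)).sum = f x := by
  induction x using WellFoundedLT.induction with
  | ind x IH =>
    have hmem : Slo f x ∈ {v : ℝ | ∃ y : PHat P, y ⋖ toHat x ∧ v = hatOP f y} :=
      (nonempty_val_set x (hatOP f)).csSup_mem (finite_val_set x (hatOP f))
    obtain ⟨y, hy, hval⟩ := hmem
    rcases covBy_toHat_iff.mp hy with ⟨rfl, hmin⟩ | ⟨a, rfl, hax⟩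
    · refine ⟨[x], ⟨List.isChain_singleton x, ⟨x, rfl, hmin⟩, rfl⟩, ?_⟩
      simp [OPinv_eq, Slo_of_isMin f hmin]
    · obtain ⟨s, hs, hsum⟩ := IH a hax.lt
      refine ⟨s ++ [x], maxChainsTo_snoc hs hax, ?_⟩
      have : Slo f x = f a := hval
      simp [OPinv_eq, hsum, this]

lemma OPmap_OPinv (f : P → ℝ) (x : P) : OPmap (OPinv f) x = f x := by
  obtain ⟨l₀, hl₀, hsum₀⟩ := exists_sum_OPinv_eq f x
  apply le_antisymm
  · refine csSup_le ⟨(l₀.map (OPinv f)).sum, ⟨l₀, hl₀, rfl⟩⟩ ?_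
    rintro v ⟨l, hl, rfl⟩
    exact sum_OPinv_le f x l hl
  · rw [← hsum₀]
    exact le_csSup ((maxChainsTo_finite x).image _).bddAbove ⟨l₀, hl₀, rfl⟩

end LemmaA
section Toggle
variable {P : Type*} [PartialOrder P] [Fintype P]
set_option linter.unusedSectionVars false

lemma maxChainsFrom_sum_le (g : P → ℝ) {e : P} {u : List P} (hu : u ∈ maxChainsFrom e) :
    (u.map g).sum ≤ ORmap g e :=
  le_csSup ((maxChainsFrom_finite e).image _).bddAbove ⟨u, hu, rfl⟩

lemma exists_maxChainsFrom_sum_eq (g : P → ℝ) (e : P) :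
    ∃ u ∈ maxChainsFrom e, (u.map g).sum = ORmap g e := by
  obtain ⟨u, hu⟩ := maxChainsFrom_nonempty e
  have h : ORmap g e ∈ (fun l => (l.map g).sum) '' maxChainsFrom e :=
    Set.Nonempty.csSup_mem ⟨_, ⟨u, hu, rfl⟩⟩ ((maxChainsFrom_finite e).image _)
  obtain ⟨u', hu', h⟩ := h
  exact ⟨u', hu', h⟩

lemma maxChainsFrom_shape {e : P} {u : List P} (hu : u ∈ maxChainsFrom e) :
    ∃ t, u = e :: t := by
  cases u with
  | nil => exact absurd hu.2.1 (by simp)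
  | cons a t =>
    have := hu.2.1
    simp only [List.head?_cons, Option.some.injEq] at this
    exact ⟨t, by rw [this]⟩

lemma mem_maxChainsFrom_ge {e : P} {u : List P} (hu : u ∈ maxChainsFrom e) {y : P}
    (hy : y ∈ u) : e ≤ y := by
  obtain ⟨t, rfl⟩ := maxChainsFrom_shape hu
  rcases List.mem_cons.mp hy with rfl | hy'
  · exact le_rfl
  · exact (List.rel_of_pairwise_cons (chain'_covBy_pairwise hu.1) hy').le

lemma mem_maxChainsTo_le {a : P} {s : List P} (hs : s ∈ maxChainsTo a) {y : P}
    (hy : y ∈ s) : y ≤ a := by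
  have hpw := chain'_covBy_pairwise hs.1
  have hdecomp := List.dropLast_append_getLast? a hs.2.2
  rw [← hdecomp] at hy hpw
  rcases List.mem_append.mp hy with hy' | hy'
  · exact ((List.pairwise_append.mp hpw).2.2 y hy' a (by simp)).le
  · simp only [List.mem_singleton] at hy'
    exact le_of_eq hy'

lemma toggle_key (g : P → ℝ) (e : P) (g' : P → ℝ)
    (hlt : ∀ y, y < e → g' y = OPinv (fun x => 1 - ORmap g x) y)
    (hge : ∀ y, e ≤ y → g' y = g y) :
    tauPL e g' e = OPinv (fun x => 1 - ORmap g x) e := by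
  set f : P → ℝ := fun x => 1 - ORmap g x with hf
  have upper : ∀ l ∈ maxChainsThru e, (l.map g').sum ≤ Slo f e + ORmap g e := by
    rintro l ⟨hc, hmin, hmax, hmem⟩
    obtain ⟨s, t, rfl⟩ := List.append_of_mem hmem
    have hpw : (s ++ e :: t).Pairwise (· < ·) := chain'_covBy_pairwise hc
    obtain ⟨hpws, hpwt, hrel⟩ := List.pairwise_append.mp hpw
    have hup : (e :: t) ∈ maxChainsFrom e := by
      refine ⟨(List.isChain_append.mp hc).2.1, rfl, ?_⟩
      obtain ⟨z, hz, hzmax⟩ := hmax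
      exact ⟨z, by rwa [List.getLast?_append_of_ne_nil _ (List.cons_ne_nil e t)] at hz, hzmax⟩
    have hupg : ((e :: t).map g') = ((e :: t).map g) := by
      apply List.map_congr_left
      intro y hy
      rcases List.mem_cons.mp hy with rfl | hy'
      · exact hge y le_rfl
      · exact hge y (List.rel_of_pairwise_cons hpwt hy').le
    have h2 : ((e :: t).map g').sum ≤ ORmap g e := by
      rw [hupg]; exact maxChainsFrom_sum_le g hup
    have h1 : (s.map g').sum ≤ Slo f e := by
      rcases eq_or_ne s [] with rfl | hs
      · have hemin : IsMin e := by
          obtain ⟨m, hm, hminm⟩ := hmin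
          simp only [List.nil_append, List.head?_cons, Option.some.injEq] at hm
          rwa [hm]
        simp only [List.map_nil, List.sum_nil]
        rw [Slo_of_isMin f hemin]
      · obtain ⟨hcs, hct, hrel'⟩ := List.isChain_append.mp hc
        have hlast' : s.getLast? = some (s.getLast hs) := List.getLast?_eq_getLast hs
        have hae : s.getLast hs ⋖ e := hrel' _ hlast' _ rfl
        have hsmem : s ∈ maxChainsTo (s.getLast hs) := by
          refine ⟨hcs, ?_, hlast'⟩
          obtain ⟨m, hm, hminm⟩ := hmin
          rw [List.head?_append_of_ne_nil _ hs] at hm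
          exact ⟨m, hm, hminm⟩
        have hmap : s.map g' = s.map (OPinv f) := by
          apply List.map_congr_left
          intro y hy
          exact hlt y (hrel y hy e (List.mem_cons_self))
        rw [hmap]
        calc (s.map (OPinv f)).sum ≤ f (s.getLast hs) := sum_OPinv_le f _ s hsmem
          _ ≤ Slo f e := le_Slo f hae
    calc ((s ++ e :: t).map g').sum = (s.map g').sum + ((e :: t).map g').sum := by simp
      _ ≤ Slo f e + ORmap g e := add_le_add h1 h2
  have attain : ∃ l ∈ maxChainsThru e, (l.map g').sum = Slo f e + ORmap g e := by
    obtain ⟨u, hu, husum⟩ := exists_maxChainsFrom_sum_eq g e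
    have hu' : (u.map g') = (u.map g) := by
      apply List.map_congr_left
      intro y hy
      exact hge y (mem_maxChainsFrom_ge hu hy)
    have hemem : e ∈ u := by
      obtain ⟨t, rfl⟩ := maxChainsFrom_shape hu
      exact List.mem_cons_self
    have hSlo : Slo f e ∈ {v : ℝ | ∃ y : PHat P, y ⋖ toHat e ∧ v = hatOP f y} :=
      (nonempty_val_set e (hatOP f)).csSup_mem (finite_val_set e (hatOP f))
    obtain ⟨y, hy, hval⟩ := hSlo
    rcases covBy_toHat_iff.mp hy with ⟨rfl, hemin⟩ | ⟨a, rfl, hae⟩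
    · refine ⟨u, ⟨hu.1, ⟨e, hu.2.1, hemin⟩, hu.2.2, hemem⟩, ?_⟩
      rw [hu', husum, hval, hatOP_bot, zero_add]
    · obtain ⟨s, hs, hssum⟩ := exists_sum_OPinv_eq f a
      have hsne : s ≠ [] := maxChainsTo_ne_nil hs
      have hune : u ≠ [] := maxChainsFrom_ne_nil hu
      have hchain : (s ++ u).Chain' (· ⋖ ·) := by
        refine List.isChain_append.mpr ⟨hs.1, hu.1, ?_⟩
        intro p hp q hq
        rw [hs.2.2] at hp
        cases hp
        rw [hu.2.1] at hq
        cases hq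
        exact hae
      have hsmap : s.map g' = s.map (OPinv f) := by
        apply List.map_congr_left
        intro y hy
        exact hlt y (lt_of_le_of_lt (mem_maxChainsTo_le hs hy) hae.lt)
      refine ⟨s ++ u, ⟨hchain, ?_, ?_, List.mem_append_right s hemem⟩, ?_⟩
      · obtain ⟨m, hm, hminm⟩ := hs.2.1
        exact ⟨m, by rwa [List.head?_append_of_ne_nil _ hsne], hminm⟩
      · obtain ⟨z, hz, hzmax⟩ := hu.2.2
        exact ⟨z, by rwa [List.getLast?_append_of_ne_nil _ hune], hzmax⟩
      · rw [List.map_append, List.sum_append, hsmap, hssum, hu', husum, hval, hatOP_toHat]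
  obtain ⟨l₀, hl₀, hsum₀⟩ := attain
  have hT : sSup ((fun l => (l.map g').sum) '' maxChainsThru e) = Slo f e + ORmap g e := by
    apply le_antisymm
    · refine csSup_le ⟨_, ⟨l₀, hl₀, rfl⟩⟩ ?_
      rintro v ⟨l, hl, rfl⟩
      exact upper l hl
    · rw [← hsum₀]
      exact le_csSup ((maxChainsThru_finite e).image _).bddAbove ⟨l₀, hl₀, rfl⟩
  rw [tauPL, Function.update_self, hT, OPinv_eq]
  show 1 - (Slo f e + ORmap g e) = (1 - ORmap g e) - Slo f e
  ring

end Toggle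
/-- Chain polytope rowmotion `Row_C = OP⁻¹ ∘ comp ∘ OR` is the composition
`τ_{x_n} ∘ ⋯ ∘ τ_{x_2} ∘ τ_{x_1}` of the chain polytope toggles in the reverse order of
any linear extension `(x_1, …, x_n)` of `P` (so `τ_{x_1}` is applied first). -/
theorem chain_polytope_rowmotion_eq_comp_toggles
    (P : Type*) [PartialOrder P] [Fintype P]
    (l : List P) (hl : IsLinExtListOn Set.univ l) :
    ∀ g : P → ℝ, InChainPolytope P g →
      OPinv (fun x => 1 - ORmap g x) = listComp (l.reverse.map tauPL) g := by
  intro g _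
  obtain ⟨hnd, hmem, hord⟩ := hl
  set h : P → ℝ := OPinv (fun x => 1 - ORmap g x) with hh
  have key : ∀ k, k ≤ l.length → listComp ((l.take k).reverse.map tauPL) g
      = fun y => if y ∈ l.take k then h y else g y := by
    intro k
    induction k with
    | zero => intro _; simp [listComp]
    | succ k IH =>
      intro hk
      have hkl : k < l.length := hk
      have hk' : k ≤ l.length := Nat.le_of_succ_le hk
      set e := l.get ⟨k, hkl⟩ with he
      have htake : l.take (k + 1) = l.take k ++ [e] := by
        rw [← List.take_concat_get' l k hkl]
        rfl
      -- membership facts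
      have hmem_take : ∀ y : P, y ∈ l.take k ↔ ∃ i : ℕ, ∃ hi : i < k, l.get ⟨i, lt_of_lt_of_le hi hk'⟩ = y := by
        intro y
        rw [List.mem_take_iff_getElem]
        constructor
        · rintro ⟨i, hi, rfl⟩
          exact ⟨i, (lt_min_iff.mp hi).1, rfl⟩
        · rintro ⟨i, hi, rfl⟩
          exact ⟨i, lt_min_iff.mpr ⟨hi, lt_of_lt_of_le hi hk'⟩, rfl⟩
      have henotin : e ∉ l.take k := by
        rw [hmem_take]
        rintro ⟨i, hi, hival⟩
        have h2 : i = k := by simpa using (List.Nodup.get_inj_iff hnd).mp hival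
        omega
      have hltmem : ∀ y : P, y < e → y ∈ l.take k := by
        intro y hy
        have hyl : y ∈ l := (hmem y).mpr trivial
        obtain ⟨i, hival⟩ := List.mem_iff_get.mp hyl
        have := hord i ⟨k, hkl⟩ (by rw [hival]; exact hy)
        rw [hmem_take]
        exact ⟨i, this, by rw [← hival]⟩
      have hgtnotin : ∀ y : P, e < y → y ∉ l.take k := by
        intro y hy hyin
        rw [hmem_take] at hyin
        obtain ⟨i, hi, hival⟩ := hyin
        have := hord ⟨k, hkl⟩ ⟨i, lt_of_lt_of_le hi hk'⟩ (by rw [hival]; exact hy)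
        simp at this
        omega
      -- unfold one step
      have hstep : listComp ((l.take (k + 1)).reverse.map tauPL) g
          = tauPL e (listComp ((l.take k).reverse.map tauPL) g) := by
        rw [htake]
        simp only [List.reverse_append, List.reverse_cons, List.reverse_nil, List.nil_append,
          List.singleton_append, List.map_cons]
        rfl
      rw [hstep, IH hk']
      set gk : P → ℝ := fun y => if y ∈ l.take k then h y else g y with hgk
      funext y
      by_cases hye : y = e
      · subst hye
        have hlt' : ∀ z, z < e → gk z = OPinv (fun x => 1 - ORmap g x) z := by
          intro z hz
          simp only [hgk]
          rw [if_pos (hltmem z hz), hh]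
        have hge' : ∀ z, e ≤ z → gk z = g z := by
          intro z hz
          rcases eq_or_lt_of_le hz with rfl | hz'
          · simp only [hgk]
            rw [if_neg henotin]
          · simp only [hgk]
            rw [if_neg (hgtnotin z hz')]
        rw [toggle_key g e gk hlt' hge',
          if_pos (by rw [htake]; exact List.mem_append_right _ (List.mem_singleton_self e)), hh]
      · rw [tauPL, Function.update_of_ne hye]
        have : (y ∈ l.take (k + 1)) ↔ (y ∈ l.take k) := by
          rw [htake, List.mem_append, List.mem_singleton]
          simp [hye]
        simp only [hgk]
        rw [if_congr this rfl rfl]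
  have hfinal := key l.length le_rfl
  rw [List.take_length] at hfinal
  rw [hfinal]
  funext y
  rw [if_pos ((hmem y).mpr trivial)]
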